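/- Let φ ∈ 𝒫, let a < b be reals, and let v: [a,b] → (0,∞) be continuous with D⁺v(t) ≤ −φ(v(t)) for all t ∈ [a,b). Then ∫_{v(a)}^{v(b)} ds/φ(s) ≤ −(b − a); equivalently, F(v(b)) ≤ F(v(a)) − (b − a), where F(q) := ∫₁^q ds/φ(s) for q > 0. -/

import Mathlib

open Filter Topology Set MeasureTheory

noncomputable section

/-- Class 𝒦: continuous, strictly increasing on `[0,∞)`, vanishing at `0`. -/
def ClassK (γ : ℝ → ℝ) : Prop :=
  ContinuousOn γ (Set.Ici 0) ∧ StrictMonoOn γ (Set.Ici 0) ∧ γ 0 = 0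

/-- Class 𝒦∞: class 𝒦 and unbounded. -/
def ClassKInf (γ : ℝ → ℝ) : Prop :=
  ClassK γ ∧ Filter.Tendsto γ Filter.atTop Filter.atTop

/-- Class 𝒦ℒ. -/
def ClassKL (β : ℝ → ℝ → ℝ) : Prop :=
  (∀ s, 0 ≤ s → ClassK (fun r => β r s)) ∧
  (∀ r, 0 ≤ r → AntitoneOn (fun s => β r s) (Set.Ici 0) ∧
    Filter.Tendsto (fun s => β r s) Filter.atTop (nhds 0))

/-- Class 𝒫: continuous, positive definite. -/
def ClassP (φ : ℝ → ℝ) : Prop :=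
  ContinuousOn φ (Set.Ici 0) ∧ φ 0 = 0 ∧ ∀ r, 0 < r → 0 < φ r

/-- Upper right Dini derivative `D⁺v(t) = limsup_{s→0⁺} (v(t+s) − v(t))/s`, valued in `EReal`. -/
def DiniUpper (v : ℝ → ℝ) (t : ℝ) : EReal :=
  Filter.limsup (fun s => (((v (t + s) - v t) / s : ℝ) : EReal)) (nhdsWithin 0 (Set.Ioi 0))

/-- Impulse time sequence with initial time `t₀ = τ 0`: strictly increasing and tending to `∞`;
the impulse times are `τ i` for `i ≥ 1`. -/
def IsImpulseSeq (t₀ : ℝ) (τ : ℕ → ℝ) : Prop :=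
  τ 0 = t₀ ∧ StrictMono τ ∧ Filter.Tendsto τ Filter.atTop Filter.atTop

/-- The set `S = {tᵢ : i ≥ 1}` of impulse times. -/
def impulseSet (τ : ℕ → ℝ) : Set ℝ := {s | ∃ i : ℕ, 1 ≤ i ∧ τ i = s}

/-- Impulsive-regular function on `[t₀,∞)`: right-continuous everywhere, continuous (within
`[t₀,∞)`) at every non-impulse time, and left limits exist at every impulse time. -/
def ImpulsiveRegular (t₀ : ℝ) (τ : ℕ → ℝ) (v : ℝ → ℝ) : Prop :=
  (∀ t, t₀ ≤ t → ContinuousWithinAt v (Set.Ici t) t) ∧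
  (∀ t, t₀ ≤ t → t ∉ impulseSet τ → ContinuousWithinAt v (Set.Ici t₀) t) ∧
  (∀ i : ℕ, 1 ≤ i → ∃ L : ℝ, Filter.Tendsto v (nhdsWithin (τ i) (Set.Iio (τ i))) (nhds L))

/-- single-interval comparison estimate: if `v > 0` is continuous on `[a,b]`
with `D⁺v ≤ −φ(v)` on `[a,b)`, then `∫_{v(a)}^{v(b)} ds/φ(s) ≤ −(b − a)`; equivalently
`F(v(b)) ≤ F(v(a)) − (b − a)` for `F(q) = ∫₁^q ds/φ(s)`. -/
lemma auxMono (g : ℝ → ℝ) (a b r : ℝ) (hab : a < b)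
    (hg : ContinuousOn g (Set.Icc a b))
    (h : ∀ t ∈ Set.Ico a b, ∀ δ > 0, ∃ s, 0 < s ∧ s < δ ∧ g (t + s) ≤ g t - r * s) :
    g b ≤ g a - r * (b - a) := by
  set S : Set ℝ := Set.Icc a b ∩ (fun t => g t + r * (t - a)) ⁻¹' Set.Iic (g a) with hS
  have hSne : a ∈ S := ⟨⟨le_refl a, hab.le⟩, by simp⟩
  have hSbdd : BddAbove S := ⟨b, fun x hx => hx.1.2⟩
  have hSclosed : IsClosed S := by
    apply ContinuousOn.preimage_isClosed_of_isClosed _ isClosed_Icc isClosed_Iic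
    exact hg.add (continuousOn_const.mul (by fun_prop))
  have hc : sSup S ∈ S := hSclosed.csSup_mem ⟨a, hSne⟩ hSbdd
  have hcb : sSup S = b := by
    by_contra hne
    have hclt : sSup S < b := lt_of_le_of_ne hc.1.2 hne
    obtain ⟨s, hs0, hsδ, hsle⟩ := h (sSup S) ⟨hc.1.1, hclt⟩ (b - sSup S) (by linarith)
    have hmem : sSup S + s ∈ S := by
      constructor
      · exact ⟨by linarith [hc.1.1], by linarith⟩
      · have := hc.2
        simp only [Set.mem_preimage, Set.mem_Iic] at this ⊢
        nlinarith
    have := le_csSup hSbdd hmem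
    linarith
  have := hc.2
  simp only [Set.mem_preimage, Set.mem_Iic, hcb] at this
  linarith

theorem intervalComparison
    (φ : ℝ → ℝ) (hφ : ClassP φ)
    (a b : ℝ) (hab : a < b)
    (v : ℝ → ℝ)
    (hvc : ContinuousOn v (Set.Icc a b))
    (hvpos : ∀ t ∈ Set.Icc a b, 0 < v t)
    (hdini : ∀ t ∈ Set.Ico a b, DiniUpper v t ≤ (((-φ (v t)) : ℝ) : EReal)) :
    (∫ s in (v a)..(v b), (φ s)⁻¹) ≤ -(b - a) ∧
    (∫ s in (1:ℝ)..(v b), (φ s)⁻¹) ≤ (∫ s in (1:ℝ)..(v a), (φ s)⁻¹) - (b - a) := by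
  have hφc := hφ.1
  have hφpos := hφ.2.2
  have hφat : ∀ q : ℝ, 0 < q → ContinuousAt (fun s => (φ s)⁻¹) q := by
    intro q hq
    exact (hφc.continuousAt (Ici_mem_nhds hq)).inv₀ (ne_of_gt (hφpos q hq))
  have hφinv : ContinuousOn (fun s => (φ s)⁻¹) (Set.Ioi 0) :=
    continuousOn_of_forall_continuousAt (fun q hq => hφat q hq)
  have hint : ∀ x y : ℝ, 0 < x → 0 < y → IntervalIntegrable (fun s => (φ s)⁻¹) volume x y := by
    intro x y hx hy
    apply (hφinv.mono ?_).intervalIntegrable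
    intro u hu
    exact lt_of_lt_of_le (lt_min hx hy) hu.1
  set F : ℝ → ℝ := fun q => ∫ s in (1:ℝ)..q, (φ s)⁻¹ with hF
  have hFsub : ∀ x y : ℝ, 0 < x → 0 < y → F y - F x = ∫ s in x..y, (φ s)⁻¹ := by
    intro x y hx hy
    exact intervalIntegral.integral_interval_sub_left (hint 1 y one_pos hy) (hint 1 x one_pos hx)
  have hFderiv : ∀ q : ℝ, 0 < q → HasDerivAt F (φ q)⁻¹ q := by
    intro q hq
    exact intervalIntegral.integral_hasDerivAt_right (hint 1 q one_pos hq)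
      (ContinuousAt.stronglyMeasurableAtFilter isOpen_Ioi (fun x hx => hφat x hx) q hq)
      (hφat q hq)
  have hFv : ContinuousOn (fun t => F (v t)) (Set.Icc a b) := by
    intro t ht
    exact ((hFderiv (v t) (hvpos t ht)).continuousAt).comp_continuousWithinAt (hvc t ht)
  have hva : 0 < v a := hvpos a ⟨le_refl a, hab.le⟩
  have hvb : 0 < v b := hvpos b ⟨hab.le, le_refl b⟩
  have key : ∀ r : ℝ, 0 < r → r < 1 → F (v b) ≤ F (v a) - r * (b - a) := by
    intro r hr0 hr1
    have hev : ∀ t ∈ Set.Ico a b,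
        ∀ᶠ s in nhdsWithin 0 (Set.Ioi 0), F (v (t + s)) ≤ F (v t) - r * s := by
      intro t ht
      have hd := hdini t ht
      rw [DiniUpper] at hd
      set p := v t with hp
      have hpmem : t ∈ Set.Icc a b := ⟨ht.1, ht.2.le⟩
      have hp0 : 0 < p := hvpos t hpmem
      set c := φ p with hc
      have hc0 : 0 < c := hφpos p hp0
      set η := c * (1 - r) / (1 + r) with hη
      have hη0 : 0 < η := by
        apply div_pos (by nlinarith) (by linarith)
      have hηc : η < c := by
        rw [hη, div_lt_iff₀ (by linarith)]
        nlinarith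
      -- δ from continuity of φ at p
      have hφatp : ContinuousAt φ p := hφc.continuousAt (Ici_mem_nhds hp0)
      obtain ⟨δ, hδ0, hδ⟩ := Metric.continuousAt_iff.mp hφatp η hη0
      set δ' := min δ (p / 2) with hδ'
      have hδ'0 : 0 < δ' := lt_min hδ0 (by linarith)
      -- E2 : t + s ∈ Icc a b eventually
      have E2 : ∀ᶠ s in nhdsWithin 0 (Set.Ioi 0), t + s ∈ Set.Icc a b := by
        filter_upwards [Ioo_mem_nhdsGT_of_mem (Set.left_mem_Ico.mpr (by linarith [ht.2] : (0:ℝ) < b - t))]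
          with s hs
        exact ⟨by linarith [ht.1, hs.1], by linarith [hs.2]⟩
      -- E3 : |v(t+s) - p| < δ'
      have hvt : Filter.Tendsto (fun s => v (t + s)) (nhdsWithin 0 (Set.Ioi 0)) (nhds p) := by
        have h1 : Filter.Tendsto (fun s : ℝ => t + s) (nhdsWithin 0 (Set.Ioi 0))
            (nhdsWithin t (Set.Icc a b)) := by
          rw [tendsto_nhdsWithin_iff]
          refine ⟨?_, E2⟩
          have hadd : Filter.Tendsto (fun s : ℝ => t + s) (nhds (0:ℝ)) (nhds t) := by
            simpa using (continuous_add_left t).tendsto 0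
          exact hadd.mono_left nhdsWithin_le_nhds
        exact (hvc t hpmem).tendsto.comp h1
      have E3 : ∀ᶠ s in nhdsWithin 0 (Set.Ioi 0), |v (t + s) - p| < δ' := by
        have := hvt.eventually (Metric.ball_mem_nhds p hδ'0)
        filter_upwards [this] with s hs
        simpa [Real.dist_eq] using hs
      -- E4 : difference quotient bound
      have E4 : ∀ᶠ s in nhdsWithin 0 (Set.Ioi 0), (v (t + s) - p) / s < -c + η := by
        have hlt : Filter.limsup (fun s => (((v (t + s) - v t) / s : ℝ) : EReal))
            (nhdsWithin 0 (Set.Ioi 0)) < (((-c + η : ℝ)) : EReal) := by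
          refine lt_of_le_of_lt hd ?_
          exact_mod_cast (by linarith : -c < -c + η)
        filter_upwards [Filter.eventually_lt_of_limsup_lt hlt] with s hs
        exact_mod_cast hs
      have E1 : ∀ᶠ s : ℝ in nhdsWithin 0 (Set.Ioi 0), 0 < s := by
        filter_upwards [self_mem_nhdsWithin (s := Set.Ioi (0:ℝ)) (a := (0:ℝ))] with s hs
        exact hs
      filter_upwards [E1, E2, E3, E4] with s hs0 hs2 hs3 hs4
      set y := v (t + s) with hy
      have hΔ : y - p < (-c + η) * s := by
        have := (div_lt_iff₀ hs0).mp hs4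
        linarith
      have hyp : y < p := by nlinarith
      have hyδ : p - δ' < y := by
        have := abs_lt.mp hs3
        linarith [this.1]
      have hy0 : 0 < y := by
        have : δ' ≤ p / 2 := min_le_right _ _
        linarith
      -- lower bound on integrand on [y, p]
      have hbound : ∀ u ∈ Set.Icc y p, (c + η)⁻¹ ≤ (φ u)⁻¹ := by
        intro u hu
        have hu0 : 0 < u := lt_of_lt_of_le hy0 hu.1
        have hud : dist u p < δ := by
          rw [Real.dist_eq, abs_lt]
          constructor
          · have : δ' ≤ δ := min_le_left _ _
            linarith [hu.1]
          · have : δ' ≤ δ := min_le_left _ _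
            linarith [hu.2, hδ'0]
        have := hδ hud
        rw [Real.dist_eq, abs_lt] at this
        have hφu : φ u ≤ c + η := by linarith [this.2]
        exact inv_anti₀ (hφpos u hu0) hφu
      have hIneq : (p - y) * (c + η)⁻¹ ≤ ∫ u in y..p, (φ u)⁻¹ := by
        have h1 : (∫ _ in y..p, (c + η)⁻¹) ≤ ∫ u in y..p, (φ u)⁻¹ :=
          intervalIntegral.integral_mono_on hyp.le intervalIntegrable_const (hint y p hy0 hp0) hbound
        rwa [intervalIntegral.integral_const, smul_eq_mul] at h1
      have hFyp : F y - F p = -∫ u in y..p, (φ u)⁻¹ := by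
        rw [← hFsub y p hy0 hp0]; ring
      have hkey : (-c + η) * (c + η)⁻¹ = -r := by
        rw [hη]
        have h1 : (1 : ℝ) + r ≠ 0 := by linarith
        have h2 : c + c * (1 - r) / (1 + r) ≠ 0 := by
          have : c + c * (1 - r) / (1 + r) = 2 * c / (1 + r) := by field_simp; ring
          rw [this]; positivity
        field_simp
        have h3 : c * (1 + r) + c * (1 - r) = 2 * c := by ring
        ring
      have hcη : (0:ℝ) < (c + η)⁻¹ := by positivity
      calc F y = F p + (F y - F p) := by ring
        _ = F p - ∫ u in y..p, (φ u)⁻¹ := by rw [hFyp]; ring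
        _ ≤ F p - (p - y) * (c + η)⁻¹ := by linarith
        _ = F p + (y - p) * (c + η)⁻¹ := by ring
        _ ≤ F p + ((-c + η) * s) * (c + η)⁻¹ := by nlinarith
        _ = F p - r * s := by rw [mul_right_comm, hkey]; ring
    apply auxMono _ a b r hab hFv
    intro t ht δ hδ
    have hIoo : ∀ᶠ s : ℝ in nhdsWithin 0 (Set.Ioi 0), s ∈ Set.Ioo 0 δ :=
      Ioo_mem_nhdsGT_of_mem (Set.left_mem_Ico.mpr hδ)
    obtain ⟨s, hs, hsmem⟩ := ((hev t ht).and hIoo).exists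
    exact ⟨s, hsmem.1, hsmem.2, hs⟩
  have hF2 : F (v b) ≤ F (v a) - (b - a) := by
    apply le_of_forall_pos_le_add
    intro ε hε
    set ε' := min ε ((b - a) / 2) with hε'
    have hε'0 : 0 < ε' := lt_min hε (by linarith)
    have hε'le : ε' ≤ (b - a) / 2 := min_le_right _ _
    set r := 1 - ε' / (b - a) with hr
    have hba : (0:ℝ) < b - a := by linarith
    have hr0 : 0 < r := by
      rw [hr]
      have : ε' / (b - a) ≤ 1 / 2 := by
        rw [div_le_div_iff₀ hba (by norm_num)]
        linarith
      linarith
    have hr1 : r < 1 := by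
      rw [hr]
      have : 0 < ε' / (b - a) := div_pos hε'0 hba
      linarith
    have := key r hr0 hr1
    have hrb : r * (b - a) = (b - a) - ε' := by
      rw [hr, sub_mul, one_mul, div_mul_cancel₀ _ (ne_of_gt hba)]
    have hε'ε : ε' ≤ ε := min_le_left _ _
    linarith
  refine ⟨?_, hF2⟩
  have hsub := hFsub (v a) (v b) hva hvb
  linarith
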